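/- Suppose a binary string y is obtained from a binary string x (ending in 0011) by one adjacent transposition, and segment both strings at occurrences of the marker 0011. Then ℓ_y − ℓ_x ∈ {−2, −1, 0, 1, 2}; moreover if ℓ_y = ℓ_x − 2 then two consecutive existing markers are destroyed and none created, and if ℓ_y = ℓ_x + 2 then two consecutive new markers are created and none destroyed. -/

import Mathlib

/-- The marker `0011`. -/
def marker : List Bool := [false, false, true, true]

/-- There is an occurrence of the marker `0011` at position `i` of `x`. -/
def occAt (x : List Bool) (i : ℕ) : Prop :=
  i + 4 ≤ x.length ∧ (x.drop i).take 4 = marker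

/-- Number of occurrences of the marker `0011` in `x`; for a string ending in the
marker this equals the number `ℓ_x` of segments of the marker segmentation. -/
def occCount (x : List Bool) : ℕ :=
  ((Finset.range x.length).filter (fun i => (x.drop i).take 4 = marker)).card

/-- If `y` is obtained from `x` (ending in `0011`) by one adjacent transposition,
then `ℓ_y - ℓ_x ∈ {-2,-1,0,1,2}`; moreover if `ℓ_y = ℓ_x - 2` then two
consecutive existing markers (at positions `i` and `i+4`) are destroyed and none
created, and if `ℓ_y = ℓ_x + 2` then two consecutive new markers are created and
none destroyed. -/
lemma take4_eq (w : List Bool) : w.take 4 = marker ↔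
    w[0]? = some false ∧ w[1]? = some false ∧ w[2]? = some true ∧ w[3]? = some true := by
  rcases w with _|⟨a, _|⟨b, _|⟨c, _|⟨d, w⟩⟩⟩⟩ <;> simp [marker]

lemma occAt_iff (z : List Bool) (i : ℕ) : occAt z i ↔
    z[i]? = some false ∧ z[i+1]? = some false ∧ z[i+2]? = some true ∧ z[i+3]? = some true := by
  have h0 := List.getElem?_drop (xs := z) (i := i) (j := 0)
  have h1 := List.getElem?_drop (xs := z) (i := i) (j := 1)
  have h2 := List.getElem?_drop (xs := z) (i := i) (j := 2)
  have h3 := List.getElem?_drop (xs := z) (i := i) (j := 3)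
  rw [occAt, take4_eq, h0, h1, h2, h3]
  simp only [Nat.add_zero]
  constructor
  · rintro ⟨-, h⟩; exact h
  · rintro ⟨a, b, c, d⟩
    refine ⟨?_, a, b, c, d⟩
    rcases List.getElem?_eq_some_iff.mp d with ⟨h, -⟩
    omega

lemma mem_occ (z : List Bool) (i : ℕ) :
    i ∈ (Finset.range z.length).filter (fun i => (z.drop i).take 4 = marker) ↔ occAt z i := by
  simp only [Finset.mem_filter, Finset.mem_range, occAt]
  constructor
  · rintro ⟨h1, h2⟩
    refine ⟨?_, h2⟩
    have := congrArg List.length h2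
    simp [marker] at this
    omega
  · rintro ⟨h1, h2⟩
    exact ⟨by omega, h2⟩

lemma key (u v : List Bool) :
    occCount (u ++ false :: true :: v) ≤ occCount (u ++ true :: false :: v) + 1 ∧
    occCount (u ++ true :: false :: v) ≤ occCount (u ++ false :: true :: v) + 2 ∧
      (occCount (u ++ true :: false :: v) = occCount (u ++ false :: true :: v) + 2 →
        (∃ i, occAt (u ++ true :: false :: v) i ∧ ¬ occAt (u ++ false :: true :: v) i ∧
          occAt (u ++ true :: false :: v) (i + 4) ∧ ¬ occAt (u ++ false :: true :: v) (i + 4)) ∧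
        ∀ j, occAt (u ++ false :: true :: v) j → occAt (u ++ true :: false :: v) j) := by
  set x := u ++ false :: true :: v with hx
  set y := u ++ true :: false :: v with hy
  set n := u.length with hn
  -- pointwise values
  have hxn : x[n]? = some false := by
    rw [hx, List.getElem?_append_right (le_refl n)]; simp [hn]
  have hxn1 : x[n+1]? = some true := by
    rw [hx, List.getElem?_append_right (by omega : u.length ≤ n + 1)]
    have : n + 1 - u.length = 1 := by omega
    rw [this]; simp
  have hyn : y[n]? = some true := by
    rw [hy, List.getElem?_append_right (le_refl n)]; simp [hn]
  have hyn1 : y[n+1]? = some false := by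
    rw [hy, List.getElem?_append_right (by omega : u.length ≤ n + 1)]
    have : n + 1 - u.length = 1 := by omega
    rw [this]; simp
  have hout : ∀ j, j ≠ n → j ≠ n + 1 → x[j]? = y[j]? := by
    intro j h1 h2
    rcases lt_or_ge j n with h | h
    · rw [hx, hy, List.getElem?_append_left h, List.getElem?_append_left h]
    · have h3 : n + 2 ≤ j := by omega
      rw [hx, hy, List.getElem?_append_right (by omega : u.length ≤ j),
        List.getElem?_append_right (by omega : u.length ≤ j)]
      have h4 : j - u.length = (j - u.length - 2) + 1 + 1 := by omega
      rw [h4]; simp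
  have hoccout : ∀ j, j + 3 < n ∨ n + 2 ≤ j → (occAt x j ↔ occAt y j) := by
    intro j hj
    rw [occAt_iff, occAt_iff, hout j (by omega) (by omega), hout (j+1) (by omega) (by omega),
      hout (j+2) (by omega) (by omega), hout (j+3) (by omega) (by omega)]
  have hdes : ∀ j, occAt x j → ¬ occAt y j → j + 1 = n := by
    intro j h1 h2
    have hr : n ≤ j + 3 ∧ j ≤ n + 1 := by
      by_contra hc
      push_neg at hc
      exact h2 ((hoccout j (by omega)).mp h1)
    rw [occAt_iff] at h1
    obtain ⟨p0, p1, p2, p3⟩ := h1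
    rcases (by omega : j + 3 = n ∨ j + 2 = n ∨ j + 1 = n ∨ j = n ∨ j = n + 1) with h|h|h|h|h
    · rw [h] at p3; rw [p3] at hxn; simp at hxn
    · rw [h] at p2; rw [p2] at hxn; simp at hxn
    · exact h
    · rw [h] at p1; rw [p1] at hxn1; simp at hxn1
    · rw [h] at p0; rw [p0] at hxn1; simp at hxn1
  have hcre : ∀ j, occAt y j → ¬ occAt x j → j = n + 1 ∨ (3 ≤ n ∧ j + 3 = n) := by
    intro j h1 h2
    have hr : n ≤ j + 3 ∧ j ≤ n + 1 := by
      by_contra hc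
      push_neg at hc
      exact h2 ((hoccout j (by omega)).mpr h1)
    rw [occAt_iff] at h1
    obtain ⟨p0, p1, p2, p3⟩ := h1
    rcases (by omega : j + 3 = n ∨ j + 2 = n ∨ j + 1 = n ∨ j = n ∨ j = n + 1) with h|h|h|h|h
    · right; omega
    · rw [(by omega : j + 3 = n + 1)] at p3; rw [p3] at hyn1; simp at hyn1
    · rw [h] at p1; rw [p1] at hyn; simp at hyn
    · rw [h] at p0; rw [p0] at hyn; simp at hyn
    · left; exact h
  classical
  set Sx := (Finset.range x.length).filter (fun i => (x.drop i).take 4 = marker) with hSx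
  set Sy := (Finset.range y.length).filter (fun i => (y.drop i).take 4 = marker) with hSy
  have hcx : occCount x = Sx.card := rfl
  have hcy : occCount y = Sy.card := rfl
  set D := Sx \ Sy with hD
  set C := Sy \ Sx with hC
  have hDmem : ∀ j, j ∈ D ↔ (occAt x j ∧ ¬ occAt y j) := by
    intro j; rw [hD, Finset.mem_sdiff, hSx, hSy, mem_occ, mem_occ]
  have hCmem : ∀ j, j ∈ C ↔ (occAt y j ∧ ¬ occAt x j) := by
    intro j; rw [hC, Finset.mem_sdiff, hSy, hSx, mem_occ, mem_occ]
  have hDsub : D ⊆ {n - 1} := by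
    intro j hj
    rw [hDmem] at hj
    have := hdes j hj.1 hj.2
    simp only [Finset.mem_singleton]
    omega
  have hCsub : C ⊆ {n - 3, n + 1} := by
    intro j hj
    rw [hCmem] at hj
    have := hcre j hj.1 hj.2
    simp only [Finset.mem_insert, Finset.mem_singleton]
    omega
  have hDcard : D.card ≤ 1 := le_trans (Finset.card_le_card hDsub) (by simp)
  have hCcard : C.card ≤ 2 := by
    refine le_trans (Finset.card_le_card hCsub) ?_
    refine le_trans (Finset.card_insert_le _ _) ?_
    simp
  have heq : Sy.card + D.card = Sx.card + C.card := by
    have h1 := Finset.card_inter_add_card_sdiff Sx Sy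
    have h2 := Finset.card_inter_add_card_sdiff Sy Sx
    rw [Finset.inter_comm] at h2
    rw [← hD] at h1
    rw [← hC] at h2
    omega
  refine ⟨by omega, by omega, ?_⟩
  intro h
  rw [hcx, hcy] at h
  have hC2 : C.card = 2 := by omega
  have hD0 : D = ∅ := Finset.card_eq_zero.mp (by omega)
  constructor
  · have hCeq : C = {n - 3, n + 1} := by
      refine Finset.eq_of_subset_of_card_le hCsub ?_
      rw [hC2]
      refine le_trans (Finset.card_insert_le _ _) (by simp)
    have hm3 : (n - 3) ∈ C := by rw [hCeq]; simp
    have hp1 : (n + 1) ∈ C := by rw [hCeq]; simp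
    rw [hCmem] at hm3 hp1
    have h3n : 3 ≤ n := by
      rcases hcre _ hm3.1 hm3.2 with h | h
      · omega
      · omega
    have h4 : n - 3 + 4 = n + 1 := by omega
    exact ⟨n - 3, hm3.1, hm3.2, h4 ▸ hp1.1, h4 ▸ hp1.2⟩
  · intro j hj
    by_contra hny
    have : j ∈ D := by rw [hDmem]; exact ⟨hj, hny⟩
    rw [hD0] at this
    simp at this

theorem stmt_11 (x y : List Bool) (hx : marker <:+ x)
    (htrans : ∃ (u v : List Bool) (a b : Bool), x = u ++ a :: b :: v ∧ y = u ++ b :: a :: v) :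
    (occCount y + 2 = occCount x ∨ occCount y + 1 = occCount x ∨
      occCount y = occCount x ∨ occCount y = occCount x + 1 ∨
      occCount y = occCount x + 2) ∧
    (occCount y + 2 = occCount x →
      (∃ i, occAt x i ∧ ¬ occAt y i ∧ occAt x (i + 4) ∧ ¬ occAt y (i + 4)) ∧
      ∀ j, occAt y j → occAt x j) ∧
    (occCount y = occCount x + 2 →
      (∃ i, occAt y i ∧ ¬ occAt x i ∧ occAt y (i + 4) ∧ ¬ occAt x (i + 4)) ∧
      ∀ j, occAt x j → occAt y j) := by
  obtain ⟨u, v, a, b, hxe, hye⟩ := htrans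
  subst hxe hye
  cases a <;> cases b
  · refine ⟨Or.inr (Or.inr (Or.inl rfl)), fun h => absurd h (by omega), fun h => absurd h (by omega)⟩
  · -- a = false, b = true : x = u ++ 01, y = u ++ 10
    obtain ⟨h1, h2, h3⟩ := key u v
    refine ⟨by omega, fun h => absurd h (by omega), h3⟩
  · -- a = true, b = false : x = u ++ 10, y = u ++ 01
    obtain ⟨h1, h2, h3⟩ := key u v
    refine ⟨by omega, fun h => h3 h.symm, fun h => absurd h (by omega)⟩
  · refine ⟨Or.inr (Or.inr (Or.inl rfl)), fun h => absurd h (by omega), fun h => absurd h (by omega)⟩
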